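/- Let f : ℕ ∪ {0} → ℝ be a probability mass function (f(j) ≥ 0 for all j, ∑_{j=0}^∞ f(j) = 1) with f(0) ∈ (0,1), and for i ≥ 1 let f^{*i} denote the i-fold convolution of f with itself (f^{*1} = f, f^{*(i+1)}(k) = ∑_{j=0}^{k} f^{*i}(j) f(k−j)). Then there exists a constant M > 0 such that for every k ∈ ℕ ∪ {0}, the series ∑_{i=1}^∞ f^{*i}(k) converges and ∑_{i=1}^∞ f^{*i}(k) ≤ M. -/
import Mathlib


/-- The `i`-fold convolution power of a probability mass function on ℕ:
`convPow f 0 = f` represents `f^{*1}`, and `convPow f i` represents `f^{*(i+1)}`,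
with `f^{*(i+1)}(k) = ∑_{j=0}^{k} f^{*i}(j) f(k-j)`. -/
def convPow (f : ℕ → ℝ) : ℕ → ℕ → ℝ
  | 0 => f
  | i + 1 => fun k => ∑ j ∈ Finset.range (k + 1), convPow f i j * f (k - j)

/-- for a probability mass function `f` with `f 0 ∈ (0,1)`, the
column sums of the branching-process transition kernel are uniformly bounded:
there is `M > 0` with `∑_{i=1}^∞ f^{*i}(k) ≤ M` for every `k`. -/
theorem branching_column_sums_bounded (f : ℕ → ℝ)
    (hnn : ∀ j, 0 ≤ f j) (hsum : HasSum f 1)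
    (h0 : 0 < f 0) (h1 : f 0 < 1) :
    ∃ M : ℝ, 0 < M ∧ ∀ k : ℕ,
      Summable (fun i : ℕ => convPow f i k) ∧ ∑' i : ℕ, convPow f i k ≤ M := by
  have hpos : (0:ℝ) < 1 - f 0 := by linarith
  set c : ℝ := (1 - f 0)⁻¹ with hc
  have hcpos : 0 < c := inv_pos.mpr hpos
  have hc1 : c * (1 - f 0) = 1 := inv_mul_cancel₀ (ne_of_gt hpos)
  have hcid : 1 + c * f 0 = c := by nlinarith
  -- nonnegativity of convolution powers
  have hcnn : ∀ i k, 0 ≤ convPow f i k := by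
    intro i
    induction i with
    | zero => exact hnn
    | succ i ih =>
      intro k
      exact Finset.sum_nonneg fun j _ => mul_nonneg (ih j) (hnn (k - j))
  -- partial sums of f are at most 1
  have hpart : ∀ s : Finset ℕ, ∑ m ∈ s, f m ≤ 1 :=
    fun s => sum_le_hasSum s (fun i _ => hnn i) hsum
  -- partial column sums
  set U : ℕ → ℕ → ℝ := fun n k => ∑ i ∈ Finset.range n, convPow f i k with hU
  have hUrec : ∀ n k, U (n + 1) k = f k + ∑ j ∈ Finset.range (k + 1), U n j * f (k - j) := by
    intro n k
    have h1' : U (n + 1) k = (∑ i ∈ Finset.range n, convPow f (i + 1) k) + convPow f 0 k :=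
      Finset.sum_range_succ' _ n
    rw [h1']
    have h2' : ∀ i, convPow f (i + 1) k
        = ∑ j ∈ Finset.range (k + 1), convPow f i j * f (k - j) := fun i => rfl
    simp only [h2']
    rw [Finset.sum_comm]
    have : ∀ j, ∑ i ∈ Finset.range n, convPow f i j * f (k - j) = U n j * f (k - j) := by
      intro j; rw [hU]; exact (Finset.sum_mul _ _ _).symm
    simp only [this, convPow]
    ring
  -- the bound function
  set b : ℕ → ℝ := fun k => if k = 0 then c * f 0 else c with hb
  have hbc : ∀ k, b k ≤ c := by
    intro k
    by_cases hk : k = 0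
    · simp [hb, hk]
      nlinarith
    · simp [hb, hk]
  have hmain : ∀ k n, U n k ≤ b k := by
    intro k
    induction k using Nat.strong_induction_on with
    | _ k ihk =>
      intro n
      induction n with
      | zero => simp [hU, hb]; positivity
      | succ n ihn =>
        rw [hUrec]
        have hstep : ∑ j ∈ Finset.range (k + 1), U n j * f (k - j)
            ≤ ∑ j ∈ Finset.range (k + 1), b j * f (k - j) := by
          apply Finset.sum_le_sum
          intro j hj
          apply mul_le_mul_of_nonneg_right _ (hnn (k - j))
          rcases Nat.lt_or_ge j k with h | h
          · exact ihk j h n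
          · have : j = k := by
              have := Finset.mem_range.mp hj; omega
            subst this; exact ihn
        have hsplit : ∑ j ∈ Finset.range (k + 1), b j * f (k - j)
            = (∑ j ∈ Finset.range k, b (j + 1) * f (k - (j + 1))) + b 0 * f (k - 0) :=
          Finset.sum_range_succ' _ k
        have hb0 : b 0 = c * f 0 := by simp [hb]
        have hbj : ∀ j, b (j + 1) = c := by intro j; simp [hb]
        have hrefl : ∑ j ∈ Finset.range k, f (k - (j + 1)) = ∑ m ∈ Finset.range k, f m := by
          rcases Nat.eq_zero_or_pos k with hk0 | hk0
          · simp [hk0]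
          · have := Finset.sum_range_reflect (fun m => f m) k
            calc ∑ j ∈ Finset.range k, f (k - (j + 1))
                = ∑ j ∈ Finset.range k, f (k - 1 - j) := by
                  apply Finset.sum_congr rfl
                  intro j hj
                  congr 1
                  have := Finset.mem_range.mp hj
                  omega
              _ = ∑ m ∈ Finset.range k, f m := this
        have hval : ∑ j ∈ Finset.range (k + 1), b j * f (k - j)
            = c * (∑ m ∈ Finset.range k, f m) + c * f 0 * f k := by
          rw [hsplit, hb0]
          simp only [hbj, Nat.sub_zero]
          rw [← Finset.mul_sum, hrefl]
        have key : f k + (c * (∑ m ∈ Finset.range k, f m) + c * f 0 * f k)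
            = c * (∑ m ∈ Finset.range (k + 1), f m) := by
          rw [Finset.sum_range_succ]
          linear_combination f k * hcid
        have hfin : f k + ∑ j ∈ Finset.range (k + 1), U n j * f (k - j)
            ≤ c * (∑ m ∈ Finset.range (k + 1), f m) := by
          rw [← key]
          have h := hstep
          rw [hval] at h
          linarith
        rcases Nat.eq_zero_or_pos k with hk0 | hk0
        · subst hk0
          simp only [hb, if_pos rfl]
          calc f 0 + ∑ j ∈ Finset.range 1, U n j * f (0 - j)
              ≤ c * (∑ m ∈ Finset.range 1, f m) := hfin
            _ = c * f 0 := by simp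
        · have hkne : k ≠ 0 := Nat.pos_iff_ne_zero.mp hk0
          simp only [hb, if_neg hkne]
          calc f k + ∑ j ∈ Finset.range (k + 1), U n j * f (k - j)
              ≤ c * (∑ m ∈ Finset.range (k + 1), f m) := hfin
            _ ≤ c * 1 := by
                apply mul_le_mul_of_nonneg_left (hpart _) (le_of_lt hcpos)
            _ = c := mul_one c
  refine ⟨c, hcpos, fun k => ?_⟩
  have hble : ∀ n, ∑ i ∈ Finset.range n, convPow f i k ≤ c :=
    fun n => le_trans (hmain k n) (hbc k)
  have hsummable : Summable (fun i : ℕ => convPow f i k) :=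
    summable_of_sum_range_le (fun i => hcnn i k) hble
  exact ⟨hsummable, Summable.tsum_le_of_sum_range_le hsummable hble⟩
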